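/- (Proposition: on the regular semisimple locus of the zero fiber with i = j = 0, the matrix s is diagonal.) Let r be an upper triangular n×n complex matrix with pairwise distinct diagonal entries and let s be a lower triangular n×n complex matrix. If the commutator [r,s] = rs − sr vanishes in 𝔟*_n, i.e. ([r,s])_{ιγ} = 0 for all ι ≥ γ (equivalently [r,s] is strictly upper triangular), then s is a diagonal matrix. -/
import Mathlib


/-- `M` is an upper triangular complex matrix. -/
def IsUT {n : ℕ} (M : Matrix (Fin n) (Fin n) ℂ) : Prop :=
  ∀ i j : Fin n, j < i → M i j = 0

/-- `M` is a lower triangular complex matrix (the chosen representatives of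
`𝔟*ₙ = 𝔤𝔩ₙ/𝔫⁺`). -/
def IsLT {n : ℕ} (M : Matrix (Fin n) (Fin n) ℂ) : Prop :=
  ∀ i j : Fin n, i < j → M i j = 0

/-- On the regular semisimple locus of the zero fiber with `i = j = 0`, the matrix `s`
is diagonal: if `r` is upper triangular with pairwise distinct diagonal entries, `s` is
lower triangular, and the commutator `[r,s] = rs − sr` vanishes in `𝔟*ₙ` (i.e. all its
entries on and below the diagonal are zero), then `s` is diagonal. -/
theorem rss_zero_fiber_s_is_diagonal
    (n : ℕ) (hn : 1 ≤ n)
    (r s : Matrix (Fin n) (Fin n) ℂ) (hr : IsUT r)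
    (hdist : ∀ i j : Fin n, i ≠ j → r i i ≠ r j j)
    (hs : IsLT s)
    (hcomm : ∀ ι γ : Fin n, γ ≤ ι → (r * s - s * r) ι γ = 0) :
    ∀ i j : Fin n, i ≠ j → s i j = 0 := by
  have key : ∀ t : ℕ, ∀ ι γ : Fin n, γ < ι → n + (γ : ℕ) ≤ (ι : ℕ) + t → s ι γ = 0 := by
    intro t
    induction t with
    | zero =>
      intro ι γ _ hle
      have := ι.isLt
      omega
    | succ t ih =>
      intro ι γ hγι hle
      have h0 := hcomm ι γ hγι.le
      rw [Matrix.sub_apply, Matrix.mul_apply, Matrix.mul_apply, sub_eq_zero] at h0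
      have h1 : ∑ k, r ι k * s k γ = r ι ι * s ι γ := by
        rw [Finset.sum_eq_single ι]
        · intro k _ hk
          rcases lt_or_gt_of_ne hk with hlt | hgt
          · rw [hr ι k hlt, zero_mul]
          · have hkγ : γ < k := lt_trans hγι hgt
            have : (ι : ℕ) < (k : ℕ) := hgt
            rw [ih k γ hkγ (by omega), mul_zero]
        · intro h; exact absurd (Finset.mem_univ ι) h
      have h2 : ∑ k, s ι k * r k γ = s ι γ * r γ γ := by
        rw [Finset.sum_eq_single γ]
        · intro k _ hk
          rcases lt_or_gt_of_ne hk with hlt | hgt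
          · have hkι : k < ι := lt_trans hlt hγι
            have : (k : ℕ) < (γ : ℕ) := hlt
            rw [ih ι k hkι (by omega), zero_mul]
          · rw [hr k γ hgt, mul_zero]
        · intro h; exact absurd (Finset.mem_univ γ) h
      rw [h1, h2] at h0
      have hne : r ι ι ≠ r γ γ := hdist ι γ (Fin.ne_of_gt hγι)
      have : (r ι ι - r γ γ) * s ι γ = 0 := by ring_nf; linear_combination h0
      rcases mul_eq_zero.mp this with h | h
      · exact absurd (sub_eq_zero.mp h) hne
      · exact h
  intro i j hij
  rcases lt_or_gt_of_ne hij with h | h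
  · exact hs i j h
  · exact key (n - 1) i j h (by have := i.isLt; have : (j : ℕ) < (i : ℕ) := h; omega)
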